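/- Let Ext: {0,1}^{n_1}×{0,1}^{n_2} → {0,1}^m be a (k_1,k_2,ε) quantum-proof two-source extractor in the Markov model, strong in X_1. Let ρ be a Markov state on {0,1}^{n_1}×{0,1}^{n_2} with side information C satisfying H_min(X_1|C)_ρ ≥ k_1 and H_min(X_2|C)_ρ ≥ k_2. For each x_1 ∈ {0,1}^{n_1}, let {K_{x_1,j}}_{j∈J} be a finite family of matrices on C with ∑_j K_{x_1,j}† K_{x_1,j} = 1_C (i.e., a Kraus representation of a quantum channel applied to C conditioned on x_1), and define σ(x_1,x_2) := ∑_j K_{x_1,j} ρ(x_1,x_2) K_{x_1,j}†. Then (1/2)∑_{y∈{0,1}^m, x_1} ‖∑_{x_2: Ext(x_1,x_2)=y} σ(x_1,x_2) − (1/2^m)∑_{x_2} σ(x_1,x_2)‖₁ ≤ ε. -/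

import Mathlib

open Kronecker Matrix
open scoped ComplexOrder
set_option linter.unusedSectionVars false
set_option maxHeartbeats 800000

/-- Trace norm of a complex matrix: `Tr √(Rᴴ R)`. -/
noncomputable def traceNorm {n : Type*} [Fintype n] [DecidableEq n] (R : Matrix n n ℂ) : ℝ :=
  (((Matrix.posSemidef_conjTranspose_mul_self R).1.eigenvectorUnitary : Matrix n n ℂ) *
    diagonal (fun i => ((Real.sqrt ((Matrix.posSemidef_conjTranspose_mul_self R).1.eigenvalues i) : ℝ) : ℂ)) *
    (star (Matrix.posSemidef_conjTranspose_mul_self R).1.eigenvectorUnitary : Matrix n n ℂ)).trace.re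

namespace Matrix.PosSemidef

noncomputable def sqrt {n : Type*} [Fintype n] [DecidableEq n] {A : Matrix n n ℂ}
    (hA : A.PosSemidef) : Matrix n n ℂ :=
  (hA.1.eigenvectorUnitary : Matrix n n ℂ) *
    diagonal (fun i => ((Real.sqrt (hA.1.eigenvalues i) : ℝ) : ℂ)) *
    (star hA.1.eigenvectorUnitary : Matrix n n ℂ)

lemma posSemidef_sqrt {n : Type*} [Fintype n] [DecidableEq n] {A : Matrix n n ℂ}
    (hA : A.PosSemidef) : hA.sqrt.PosSemidef := by
  unfold sqrt
  have hd : (diagonal (fun i => ((Real.sqrt (hA.1.eigenvalues i) : ℝ) : ℂ))).PosSemidef :=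
    posSemidef_diagonal_iff.mpr fun i => Complex.zero_le_real.mpr (Real.sqrt_nonneg _)
  have := hd.mul_mul_conjTranspose_same (hA.1.eigenvectorUnitary : Matrix n n ℂ)
  simp only [Unitary.coe_star, star_eq_conjTranspose] at this ⊢
  exact this

lemma sqrt_mul_self {n : Type*} [Fintype n] [DecidableEq n] {A : Matrix n n ℂ}
    (hA : A.PosSemidef) : hA.sqrt * hA.sqrt = A := by
  unfold sqrt
  have hV : star (hA.1.eigenvectorUnitary : Matrix n n ℂ) * (hA.1.eigenvectorUnitary : Matrix n n ℂ) = 1 :=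
    Unitary.coe_star_mul_self _
  have hDD : diagonal (fun i => ((Real.sqrt (hA.1.eigenvalues i) : ℝ) : ℂ)) *
      diagonal (fun i => ((Real.sqrt (hA.1.eigenvalues i) : ℝ) : ℂ)) =
      diagonal (RCLike.ofReal ∘ hA.1.eigenvalues) := by
    rw [diagonal_mul_diagonal]
    congr 1
    funext i
    simp only [Function.comp_apply]
    rw [← Complex.ofReal_mul, Real.mul_self_sqrt (hA.eigenvalues_nonneg i)]
    rfl
  have hgen : ∀ V D : Matrix n n ℂ, V * D * star V * (V * D * star V) =
      V * D * (star V * V) * D * star V := fun V D => by simp only [mul_assoc]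
  conv_rhs => rw [hA.1.spectral_theorem, Unitary.conjStarAlgAut_apply]
  rw [hgen, hV, mul_one, ← hDD]
  simp only [mul_assoc]

end Matrix.PosSemidef

/-- `H_min(S|C)_ρ ≥ k` for a (possibly subnormalized) cq-state `ρ`:
for every POVM `{E s}`, `∑ s Tr(E s ρ s) ≤ 2^(-k)`. -/
def HminGe {S C : Type*} [Fintype S] [Fintype C] [DecidableEq C]
    (ρ : S → Matrix C C ℂ) (k : ℝ) : Prop :=
  ∀ E : S → Matrix C C ℂ, (∀ s, (E s).PosSemidef) → (∑ s, E s) = 1 →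
    (∑ s, (E s * ρ s).trace).re ≤ (2:ℝ) ^ (-k)

/-- The ccq Markov state `∑ t p(t) • ρ₁ᵗ(x₁) ⊗ ρ₂ᵗ(x₂) ⊗ |t⟩⟨t|` on `C = C₁ ⊗ C₂ ⊗ ℂ^T`. -/
noncomputable def markovState {n1 n2 d1 d2 : ℕ} {T : Type*} [Fintype T] [DecidableEq T]
    (p : T → ℝ)
    (ρ1 : T → (Fin n1 → Bool) → Matrix (Fin d1) (Fin d1) ℂ)
    (ρ2 : T → (Fin n2 → Bool) → Matrix (Fin d2) (Fin d2) ℂ)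
    (x1 : Fin n1 → Bool) (x2 : Fin n2 → Bool) :
    Matrix (Fin d1 × Fin d2 × T) (Fin d1 × Fin d2 × T) ℂ :=
  ∑ t, p t • (ρ1 t x1 ⊗ₖ (ρ2 t x2 ⊗ₖ Matrix.single t t (1:ℂ)))

/-- `Ext` is a `(k₁,k₂,ε)` quantum-proof two-source extractor in the Markov model,
strong in `X₁` (with `m` output bits). -/
def QProofMarkovStrong1 (n1 n2 m : ℕ)
    (Ext : (Fin n1 → Bool) → (Fin n2 → Bool) → Fin m → Bool) (k1 k2 ε : ℝ) : Prop :=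
  ∀ (d1 d2 : ℕ) (T : Type) [Fintype T] [DecidableEq T] (p : T → ℝ)
    (ρ1 : T → (Fin n1 → Bool) → Matrix (Fin d1) (Fin d1) ℂ)
    (ρ2 : T → (Fin n2 → Bool) → Matrix (Fin d2) (Fin d2) ℂ),
    (∀ t, 0 ≤ p t) → (∑ t, p t) = 1 →
    (∀ t x1, (ρ1 t x1).PosSemidef) → (∀ t, (∑ x1, (ρ1 t x1).trace) = 1) →
    (∀ t x2, (ρ2 t x2).PosSemidef) → (∀ t, (∑ x2, (ρ2 t x2).trace) = 1) →
    HminGe (fun x1 => ∑ x2, markovState p ρ1 ρ2 x1 x2) k1 →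
    HminGe (fun x2 => ∑ x1, markovState p ρ1 ρ2 x1 x2) k2 →
    (1/2) * ∑ y : Fin m → Bool, ∑ x1,
      traceNorm ((∑ x2 ∈ Finset.univ.filter (fun x2 => Ext x1 x2 = y),
          markovState p ρ1 ρ2 x1 x2)
        - ((2:ℝ)^m)⁻¹ • ∑ x2, markovState p ρ1 ρ2 x1 x2) ≤ ε

section AuxChannelContractivity

variable {n : Type*} [Fintype n] [DecidableEq n]

noncomputable def eN {n : Type*} [Fintype n] (x : n → ℂ) : ℝ :=
  ‖(WithLp.equiv 2 (n → ℂ)).symm x‖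

lemma eN_nonneg {n : Type*} [Fintype n] (x : n → ℂ) : 0 ≤ eN x := norm_nonneg _

lemma dot_eq_inner {n : Type*} [Fintype n] (x y : n → ℂ) :
    (star x) ⬝ᵥ y = @inner ℂ _ _ ((WithLp.equiv 2 (n → ℂ)).symm x) ((WithLp.equiv 2 (n → ℂ)).symm y) :=
  dotProduct_comm _ _

lemma eN_sq {n : Type*} [Fintype n] (x : n → ℂ) : ((star x) ⬝ᵥ x).re = eN x ^ 2 := by
  rw [dot_eq_inner, inner_self_eq_norm_sq_to_K]
  norm_cast

lemma eN_CS {n : Type*} [Fintype n] (x y : n → ℂ) :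
    ‖(star x) ⬝ᵥ y‖ ≤ eN x * eN y := by
  rw [dot_eq_inner]; exact norm_inner_le_norm _ _

lemma re_dot_le {n : Type*} [Fintype n] (x y : n → ℂ) :
    ((star x) ⬝ᵥ y).re ≤ eN x * eN y :=
  (Complex.re_le_norm _).trans (eN_CS x y)

/-- adjoint identity -/
lemma adj_dot (M : Matrix n n ℂ) (x y : n → ℂ) :
    star (M *ᵥ x) ⬝ᵥ y = (star x) ⬝ᵥ (Mᴴ *ᵥ y) := by
  rw [star_mulVec, dotProduct_mulVec]

def IsCon (M : Matrix n n ℂ) : Prop := ∀ x : n → ℂ, eN (M *ᵥ x) ≤ eN x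

lemma con_adj {M : Matrix n n ℂ} (hM : IsCon M) : IsCon Mᴴ := by
  intro y
  have h1 : eN (Mᴴ *ᵥ y) ^ 2 = (star (M *ᵥ (Mᴴ *ᵥ y)) ⬝ᵥ y).re := by
    rw [adj_dot, eN_sq]
  have h2 := re_dot_le (M *ᵥ (Mᴴ *ᵥ y)) y
  have h3 : eN (M *ᵥ (Mᴴ *ᵥ y)) ≤ eN (Mᴴ *ᵥ y) := hM _
  nlinarith [eN_nonneg (Mᴴ *ᵥ y), eN_nonneg y, eN_nonneg (M *ᵥ (Mᴴ *ᵥ y))]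

lemma con_proj {P : Matrix n n ℂ} (h1 : P * P = P) (h2 : Pᴴ = P) : IsCon P := by
  intro x
  have key : eN (P *ᵥ x) ^ 2 = (star x ⬝ᵥ (P *ᵥ x)).re := by
    rw [← eN_sq, adj_dot, h2, mulVec_mulVec, h1]
  have h3 := re_dot_le x (P *ᵥ x)
  nlinarith [eN_nonneg x, eN_nonneg (P *ᵥ x)]

lemma con_of_star_mul_self {U P : Matrix n n ℂ} (hU : Uᴴ * U = P)
    (h1 : P * P = P) (h2 : Pᴴ = P) : IsCon U := by
  intro x
  have e1 : eN (U *ᵥ x) ^ 2 = eN (P *ᵥ x) ^ 2 := by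
    rw [← eN_sq, ← eN_sq, adj_dot, adj_dot, h2, mulVec_mulVec, mulVec_mulVec, hU, h1]
  have e2 := con_proj h1 h2 x
  nlinarith [eN_nonneg (U *ᵥ x), eN_nonneg (P *ᵥ x), eN_nonneg x]

lemma con_mul {A B : Matrix n n ℂ} (hA : IsCon A) (hB : IsCon B) : IsCon (A * B) := by
  intro x
  rw [← mulVec_mulVec]
  exact (hA _).trans (hB x)

lemma VDV_mul (V A B : Matrix n n ℂ) (hV : star V * V = 1) :
    (V * A * star V) * (V * B * star V) = V * (A * B) * star V := by
  have h : star V * (V * (B * star V)) = B * star V := by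
    rw [← mul_assoc, hV, one_mul]
  calc (V * A * star V) * (V * B * star V)
      = V * (A * (star V * (V * (B * star V)))) := by simp only [mul_assoc]
    _ = V * (A * (B * star V)) := by rw [h]
    _ = V * (A * B) * star V := by simp only [mul_assoc]

lemma exists_pinv {P : Matrix n n ℂ} (hP : P.IsHermitian) :
    ∃ Q : Matrix n n ℂ, Qᴴ = Q ∧ Q * P = P * Q ∧ Q * (P * P) = P := by
  classical
  set V : Matrix n n ℂ := (hP.eigenvectorUnitary : Matrix n n ℂ) with hVdef
  have hV : star V * V = 1 := (Unitary.mem_iff.mp (hP.eigenvectorUnitary).2).1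
  set g : ℝ → ℝ := fun l => if l = 0 then 0 else l⁻¹ with hg
  set D : Matrix n n ℂ := diagonal (RCLike.ofReal ∘ hP.eigenvalues) with hD
  set Dg : Matrix n n ℂ := diagonal (RCLike.ofReal ∘ g ∘ hP.eigenvalues) with hDg
  have hspec : P = V * D * star V := hP.spectral_theorem
  have hDgH : Dgᴴ = Dg := by
    rw [hDg, diagonal_conjTranspose]
    refine congrArg diagonal (funext fun i => ?_)
    simp [Pi.star_apply, RCLike.star_def, Complex.conj_ofReal]
  have hcomm : Dg * D = D * Dg := by
    rw [hD, hDg, diagonal_mul_diagonal, diagonal_mul_diagonal]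
    refine congrArg diagonal (funext fun i => mul_comm _ _)
  have h3 : Dg * (D * D) = D := by
    rw [hD, hDg, diagonal_mul_diagonal, diagonal_mul_diagonal]
    refine congrArg diagonal (funext fun i => ?_)
    simp only [Function.comp_apply, hg]
    by_cases h : hP.eigenvalues i = 0
    · simp [h]
    · rw [if_neg h]
      have : (hP.eigenvalues i : ℂ) ≠ 0 := by exact_mod_cast h
      push_cast
      field_simp
  refine ⟨V * Dg * star V, ?_, ?_, ?_⟩
  · rw [conjTranspose_mul, conjTranspose_mul, hDgH]
    simp [star_eq_conjTranspose, conjTranspose_conjTranspose, mul_assoc]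
  · rw [hspec, VDV_mul _ _ _ hV, VDV_mul _ _ _ hV, hcomm]
  · rw [hspec, VDV_mul _ _ _ hV, VDV_mul _ _ _ hV, h3]


lemma polar (X : Matrix n n ℂ) :
    ∃ (M U : Matrix n n ℂ), IsCon M ∧ IsCon U ∧
      M * X = (posSemidef_conjTranspose_mul_self X).sqrt ∧
      X = U * (posSemidef_conjTranspose_mul_self X).sqrt := by
  set hXX := posSemidef_conjTranspose_mul_self X with hXXdef
  set P := hXX.sqrt with hPdef
  have hP : P.PosSemidef := hXX.posSemidef_sqrt
  have hPH : Pᴴ = P := hP.1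
  have hPP : P * P = Xᴴ * X := by
    rw [hPdef, hXX.sqrt_mul_self]
  obtain ⟨Q, hQH, hQC, hQPP⟩ := exists_pinv hP.1
  have hPPQ : (P * P) * Q = P := by
    have := congrArg conjTranspose hQPP
    rwa [conjTranspose_mul, conjTranspose_mul, hQH, hPH] at this
  -- the projection
  have hPiH : (Q * P)ᴴ = Q * P := by
    rw [conjTranspose_mul, hQH, hPH, hQC]
  have hPiPi : (Q * P) * (Q * P) = Q * P := by
    calc Q * P * (Q * P) = Q * (P * Q * P) := by simp only [mul_assoc]
      _ = Q * (Q * (P * P)) := by rw [← hQC]; simp only [mul_assoc]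
      _ = Q * P := by rw [hQPP]
  -- U := X * Q is a contraction
  have hUc : (X * Q)ᴴ * (X * Q) = Q * P := by
    rw [conjTranspose_mul, hQH]
    calc Q * Xᴴ * (X * Q) = Q * ((Xᴴ * X) * Q) := by simp only [mul_assoc]
      _ = Q * (P * P * Q) := by rw [hPP]
      _ = Q * P := by rw [hPPQ]
  have hU : IsCon (X * Q) := con_of_star_mul_self hUc hPiPi hPiH
  have hM : IsCon (Q * Xᴴ) := by
    have : (X * Q)ᴴ = Q * Xᴴ := by rw [conjTranspose_mul, hQH]
    rw [← this]
    exact con_adj hU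
  refine ⟨Q * Xᴴ, X * Q, hM, hU, ?_, ?_⟩
  · rw [mul_assoc, ← hPP, hQPP]
  · -- X = (X * Q) * P, i.e. X * (Q * P) = X
    have h2 : (P * P) * (Q * P) = P * P := by
      rw [← mul_assoc, hPPQ, hPP]
    have h3 : (Q * P) * (P * P) = P * P := by
      rw [mul_assoc]
      calc Q * (P * (P * P)) = (Q * (P * P)) * P := by simp only [mul_assoc]
        _ = P * P := by rw [hQPP]
    have key : (X - X * (Q * P))ᴴ * (X - X * (Q * P)) = 0 := by
      have e1 : Xᴴ * X = P * P := hPP.symm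
      have e2 : Xᴴ * (X * (Q * P)) = P * P := by rw [← mul_assoc, e1, h2]
      have e3 : (X * (Q * P))ᴴ * X = P * P := by
        rw [conjTranspose_mul, hPiH, mul_assoc, e1, h3]
      have e4 : (X * (Q * P))ᴴ * (X * (Q * P)) = P * P := by
        rw [conjTranspose_mul, hPiH, mul_assoc, ← mul_assoc Xᴴ, e1, h2, h3]
      rw [conjTranspose_sub, sub_mul, mul_sub, mul_sub, e1, e2, e3, e4]
      simp
    have hzero : X - X * (Q * P) = 0 := conjTranspose_mul_self_eq_zero.mp key
    have hXPi : X * (Q * P) = X := (sub_eq_zero.mp hzero).symm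
    rw [← mul_assoc] at hXPi
    exact hXPi.symm


lemma re_trace_mul_le {W P : Matrix n n ℂ} (hW : IsCon W) (hP : P.PosSemidef) :
    (trace (W * P)).re ≤ (trace P).re := by
  classical
  set R := hP.sqrt with hRdef
  have hR : R.PosSemidef := hP.posSemidef_sqrt
  have hRR : R * R = P := hP.sqrt_mul_self
  have hstar : ∀ a i : n, star (R a i) = R i a := by
    intro a i
    conv_rhs => rw [← hR.1]
    exact (conjTranspose_apply R a i).symm
  have htr : trace (W * P) = trace (R * (W * R)) := by
    rw [← hRR, ← mul_assoc, trace_mul_comm]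
  have hentry : ∀ i : n, ((R * (W * R)) i i).re ≤ (P i i).re := by
    intro i
    set r : n → ℂ := fun a => R a i with hr
    have h1 : (R * (W * R)) i i = (star r) ⬝ᵥ (W *ᵥ r) := by
      simp only [mul_apply, mulVec, dotProduct, Pi.star_apply, hr, hstar]
    have h2 : P i i = (star r) ⬝ᵥ r := by
      rw [← hRR, mul_apply]
      simp only [dotProduct, Pi.star_apply, hr, hstar]
    rw [h1, h2]
    have := re_dot_le r (W *ᵥ r)
    have h3 : eN (W *ᵥ r) ≤ eN r := hW r
    have h4 : ((star r) ⬝ᵥ r).re = eN r ^ 2 := eN_sq r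
    nlinarith [eN_nonneg r, eN_nonneg (W *ᵥ r)]
  calc (trace (W * P)).re = ∑ i, ((R * (W * R)) i i).re := by
        rw [htr, trace]
        simp [diag, Complex.re_sum]
    _ ≤ ∑ i, (P i i).re := Finset.sum_le_sum fun i _ => hentry i
    _ = (trace P).re := by rw [trace]; simp [diag, Complex.re_sum]

lemma re_trace_le_traceNorm {N : Matrix n n ℂ} (hN : IsCon N) (X : Matrix n n ℂ) :
    (trace (N * X)).re ≤ traceNorm X := by
  obtain ⟨M, U, hM, hU, hMX, hXU⟩ := polar X
  have hsq : ((posSemidef_conjTranspose_mul_self X).sqrt).PosSemidef :=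
    (posSemidef_conjTranspose_mul_self X).posSemidef_sqrt
  calc (trace (N * X)).re
      = (trace ((N * U) * (posSemidef_conjTranspose_mul_self X).sqrt)).re := by
        rw [mul_assoc, ← hXU]
    _ ≤ (trace ((posSemidef_conjTranspose_mul_self X).sqrt)).re :=
        re_trace_mul_le (con_mul hN hU) hsq
    _ = traceNorm X := rfl

lemma exists_con_trace_eq (X : Matrix n n ℂ) :
    ∃ M : Matrix n n ℂ, IsCon M ∧ (trace (M * X)).re = traceNorm X := by
  obtain ⟨M, U, hM, hU, hMX, hXU⟩ := polar X
  exact ⟨M, hM, by rw [hMX]; rfl⟩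


lemma mulVec_sum' {J : Type*} (s : Finset J) (A : J → Matrix n n ℂ) (x : n → ℂ) :
    (∑ j ∈ s, A j) *ᵥ x = ∑ j ∈ s, A j *ᵥ x := by
  ext a
  simp only [mulVec, dotProduct, Matrix.sum_apply, Finset.sum_apply, Finset.sum_mul]
  rw [Finset.sum_comm]

lemma dot_sum' {J : Type*} (s : Finset J) (v : J → (n → ℂ)) (x : n → ℂ) :
    x ⬝ᵥ (∑ j ∈ s, v j) = ∑ j ∈ s, x ⬝ᵥ v j := by
  simp only [dotProduct, Finset.sum_apply, Finset.mul_sum]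
  rw [Finset.sum_comm]

lemma sum_eN_sq {J : Type*} [Fintype J] (K : J → Matrix n n ℂ)
    (hK : ∑ j, (K j)ᴴ * K j = 1) (x : n → ℂ) :
    ∑ j, eN (K j *ᵥ x) ^ 2 = eN x ^ 2 := by
  have h : ∀ j, eN (K j *ᵥ x) ^ 2 = ((star x) ⬝ᵥ (((K j)ᴴ * K j) *ᵥ x)).re := by
    intro j
    rw [← eN_sq, adj_dot, mulVec_mulVec]
  rw [Finset.sum_congr rfl (fun j _ => h j), ← Complex.re_sum, ← dot_sum',
    ← mulVec_sum', hK, one_mulVec, eN_sq]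

lemma con_channel {J : Type*} [Fintype J] {K : J → Matrix n n ℂ}
    (hK : ∑ j, (K j)ᴴ * K j = 1) {M : Matrix n n ℂ} (hM : IsCon M) :
    IsCon (∑ j, (K j)ᴴ * M * K j) := by
  intro x
  set N : Matrix n n ℂ := ∑ j, (K j)ᴴ * M * K j with hN
  set y : n → ℂ := N *ᵥ x with hy
  have key : eN y ^ 2 ≤ eN y * eN x := by
    have h1 : eN y ^ 2 = ((star y) ⬝ᵥ (N *ᵥ x)).re := by rw [← eN_sq, ← hy]
    have h2a : ∀ j, (star (K j *ᵥ y)) ⬝ᵥ (M *ᵥ (K j *ᵥ x))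
        = (star y) ⬝ᵥ (((K j)ᴴ * M * K j) *ᵥ x) := by
      intro j
      rw [adj_dot, mulVec_mulVec, mulVec_mulVec]
    have h2 : (star y) ⬝ᵥ (N *ᵥ x) =
        ∑ j, (star (K j *ᵥ y)) ⬝ᵥ (M *ᵥ (K j *ᵥ x)) := by
      rw [hN, mulVec_sum', dot_sum']
      exact Finset.sum_congr rfl fun j _ => (h2a j).symm
    have h3 : ∀ j, ((star (K j *ᵥ y)) ⬝ᵥ (M *ᵥ (K j *ᵥ x))).re
        ≤ eN (K j *ᵥ y) * eN (K j *ᵥ x) := by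
      intro j
      refine (re_dot_le _ _).trans ?_
      exact mul_le_mul_of_nonneg_left (hM _) (eN_nonneg _)
    have h4 : (∑ j, eN (K j *ᵥ y) * eN (K j *ᵥ x)) ^ 2
        ≤ (eN y ^ 2) * (eN x ^ 2) := by
      calc (∑ j, eN (K j *ᵥ y) * eN (K j *ᵥ x)) ^ 2
          ≤ (∑ j, eN (K j *ᵥ y) ^ 2) * (∑ j, eN (K j *ᵥ x) ^ 2) :=
            Finset.sum_mul_sq_le_sq_mul_sq _ _ _
        _ = (eN y ^ 2) * (eN x ^ 2) := by rw [sum_eN_sq K hK, sum_eN_sq K hK]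
    have h5 : (0:ℝ) ≤ ∑ j, eN (K j *ᵥ y) * eN (K j *ᵥ x) :=
      Finset.sum_nonneg fun j _ => mul_nonneg (eN_nonneg _) (eN_nonneg _)
    have h6 : ∑ j, eN (K j *ᵥ y) * eN (K j *ᵥ x) ≤ eN y * eN x := by
      nlinarith [eN_nonneg y, eN_nonneg x, mul_nonneg (eN_nonneg y) (eN_nonneg x)]
    calc eN y ^ 2 = ((star y) ⬝ᵥ (N *ᵥ x)).re := h1
      _ = ∑ j, ((star (K j *ᵥ y)) ⬝ᵥ (M *ᵥ (K j *ᵥ x))).re := by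
          rw [h2, Complex.re_sum]
      _ ≤ ∑ j, eN (K j *ᵥ y) * eN (K j *ᵥ x) := Finset.sum_le_sum fun j _ => h3 j
      _ ≤ eN y * eN x := h6
  nlinarith [eN_nonneg y, eN_nonneg x]

lemma traceNorm_channel_le {J : Type*} [Fintype J] (K : J → Matrix n n ℂ)
    (hK : ∑ j, (K j)ᴴ * K j = 1) (A : Matrix n n ℂ) :
    traceNorm (∑ j, K j * A * (K j)ᴴ) ≤ traceNorm A := by
  classical
  set Y : Matrix n n ℂ := ∑ j, K j * A * (K j)ᴴ with hY
  obtain ⟨M, hM, hMY⟩ := exists_con_trace_eq Y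
  have htr : trace (M * Y) = trace ((∑ j, (K j)ᴴ * M * K j) * A) := by
    rw [hY, Finset.mul_sum, trace_sum, Finset.sum_mul, trace_sum]
    refine Finset.sum_congr rfl fun j _ => ?_
    calc trace (M * (K j * A * (K j)ᴴ))
        = trace (M * K j * A * (K j)ᴴ) := by
          rw [show M * (K j * A * (K j)ᴴ) = M * K j * A * (K j)ᴴ by
            simp only [mul_assoc]]
      _ = trace ((K j)ᴴ * (M * K j) * A) := trace_mul_cycle _ _ _
      _ = trace ((K j)ᴴ * M * K j * A) := by
          rw [show (K j)ᴴ * (M * K j) = (K j)ᴴ * M * K j by simp only [mul_assoc]]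
  rw [← hMY, htr]
  exact re_trace_le_traceNorm (con_channel hK hM) A

end AuxChannelContractivity

theorem strong_extractor_secure_after_channel_on_side_information
    (n1 n2 m : ℕ) (Ext : (Fin n1 → Bool) → (Fin n2 → Bool) → Fin m → Bool)
    (k1 k2 ε : ℝ)
    (hExt : QProofMarkovStrong1 n1 n2 m Ext k1 k2 ε)
    (d1 d2 : ℕ) (T : Type) [Fintype T] [DecidableEq T]
    (p : T → ℝ) (hp : ∀ t, 0 ≤ p t) (hpsum : (∑ t, p t) = 1)
    (ρ1 : T → (Fin n1 → Bool) → Matrix (Fin d1) (Fin d1) ℂ)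
    (ρ2 : T → (Fin n2 → Bool) → Matrix (Fin d2) (Fin d2) ℂ)
    (hρ1 : ∀ t x1, (ρ1 t x1).PosSemidef) (hρ1tr : ∀ t, (∑ x1, (ρ1 t x1).trace) = 1)
    (hρ2 : ∀ t x2, (ρ2 t x2).PosSemidef) (hρ2tr : ∀ t, (∑ x2, (ρ2 t x2).trace) = 1)
    (h1 : HminGe (fun x1 => ∑ x2, markovState p ρ1 ρ2 x1 x2) k1)
    (h2 : HminGe (fun x2 => ∑ x1, markovState p ρ1 ρ2 x1 x2) k2)
    -- a quantum channel on `C` conditioned on `x₁`, given by Kraus operators: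
    (J : Type) [Fintype J]
    (K : (Fin n1 → Bool) → J →
      Matrix (Fin d1 × Fin d2 × T) (Fin d1 × Fin d2 × T) ℂ)
    (hK : ∀ x1, (∑ j, (K x1 j)ᴴ * K x1 j) = 1) :
    (1/2) * ∑ y : Fin m → Bool, ∑ x1,
      traceNorm ((∑ x2 ∈ Finset.univ.filter (fun x2 => Ext x1 x2 = y),
          ∑ j, K x1 j * markovState p ρ1 ρ2 x1 x2 * (K x1 j)ᴴ)
        - ((2:ℝ)^m)⁻¹ • ∑ x2, ∑ j, K x1 j * markovState p ρ1 ρ2 x1 x2 * (K x1 j)ᴴ)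
      ≤ ε := by
  classical
  have hstep : ∀ (x1 : Fin n1 → Bool) (y : Fin m → Bool),
      (∑ x2 ∈ Finset.univ.filter (fun x2 => Ext x1 x2 = y),
          ∑ j, K x1 j * markovState p ρ1 ρ2 x1 x2 * (K x1 j)ᴴ)
        - ((2:ℝ)^m)⁻¹ • ∑ x2, ∑ j, K x1 j * markovState p ρ1 ρ2 x1 x2 * (K x1 j)ᴴ
      = ∑ j, K x1 j *
          ((∑ x2 ∈ Finset.univ.filter (fun x2 => Ext x1 x2 = y),
              markovState p ρ1 ρ2 x1 x2)
            - ((2:ℝ)^m)⁻¹ • ∑ x2, markovState p ρ1 ρ2 x1 x2) * (K x1 j)ᴴ := by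
    intro x1 y
    simp only [Matrix.mul_sub, Matrix.sub_mul, Matrix.mul_smul, Matrix.smul_mul,
      Finset.mul_sum, Finset.sum_mul, Finset.sum_sub_distrib, Finset.smul_sum]
    rw [Finset.sum_comm]
    congr 1
    exact Finset.sum_comm
  have hbound : ∀ (x1 : Fin n1 → Bool) (y : Fin m → Bool),
      traceNorm ((∑ x2 ∈ Finset.univ.filter (fun x2 => Ext x1 x2 = y),
          ∑ j, K x1 j * markovState p ρ1 ρ2 x1 x2 * (K x1 j)ᴴ)
        - ((2:ℝ)^m)⁻¹ • ∑ x2, ∑ j, K x1 j * markovState p ρ1 ρ2 x1 x2 * (K x1 j)ᴴ)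
      ≤ traceNorm ((∑ x2 ∈ Finset.univ.filter (fun x2 => Ext x1 x2 = y),
          markovState p ρ1 ρ2 x1 x2)
        - ((2:ℝ)^m)⁻¹ • ∑ x2, markovState p ρ1 ρ2 x1 x2) := by
    intro x1 y
    rw [hstep x1 y]
    exact traceNorm_channel_le (K x1) (hK x1) _
  have hfin := hExt d1 d2 T p ρ1 ρ2 hp hpsum hρ1 hρ1tr hρ2 hρ2tr h1 h2
  refine le_trans ?_ hfin
  refine mul_le_mul_of_nonneg_left ?_ (by norm_num)
  refine Finset.sum_le_sum fun y _ => ?_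
  exact Finset.sum_le_sum fun x1 _ => hbound x1 y
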